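/- Let F be a field and G = GL(4, F). Let B be the Borel subgroup of upper triangular matrices, N the unipotent upper triangular subgroup, and w_1, w_2, w_3 the simple reflections (permutation matrices for transpositions (12), (23), (34)). Then every element γ of the Bruhat cell B·w_2w_3w_2·N, written in Bruhat normal form γ = u_1 t w_2w_3w_2 u_2 with u_1 ∈ N having (2,3)-entry a, t diagonal, and u_2 ∈ N having (2,3)-entry b, satisfies: if a + b ≠ 0 then γ is conjugate by an element of w_2 N_2 (where N_2 is the one-parameter unipotent subgroup for the simple root α_2) to an element of B·w_2w_3·N, and if a + b = 0 then γ is conjugate by an element of w_2 N_2 to an element of B·w_3·N. -/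

import Mathlib

set_option maxHeartbeats 1600000

open Matrix

variable {F : Type*} [Field F]

/-- The permutation matrix of `σ` (column convention). -/
def permM {n : ℕ} (F : Type*) [Field F] (σ : Equiv.Perm (Fin n)) :
    Matrix (Fin n) (Fin n) F :=
  Matrix.of fun i j => if σ j = i then 1 else 0

/-- `g` lies in the Borel subgroup `B` of upper triangular matrices. -/
def inB {n : ℕ} (g : GL (Fin n) F) : Prop :=
  ∀ i j : Fin n, j < i → (g : Matrix (Fin n) (Fin n) F) i j = 0

/-- `g` lies in the unipotent upper triangular subgroup `N`. -/
def inN {n : ℕ} (g : GL (Fin n) F) : Prop :=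
  inB g ∧ ∀ i : Fin n, (g : Matrix (Fin n) (Fin n) F) i i = 1

/-- The Bruhat cell `B·w·N`. -/
def cell {n : ℕ} (w : GL (Fin n) F) : Set (GL (Fin n) F) :=
  {γ | ∃ b u : GL (Fin n) F, inB b ∧ inN u ∧ γ = b * w * u}

/-- `g` lies in the one-parameter root subgroup `N₂` for the second simple root of `GL(4)`:
identity except possibly at the `(2,3)` entry (0-based `(1,2)`). -/
def inN2 (g : GL (Fin 4) F) : Prop :=
  ∀ i j : Fin 4, ¬(i = 1 ∧ j = 2) →
    (g : Matrix (Fin 4) (Fin 4) F) i j = if i = j then 1 else 0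

section Aux

set_option linter.unusedSectionVars false

theorem eta_fin_four' (A : Matrix (Fin 4) (Fin 4) F) :
    A = !![A 0 0, A 0 1, A 0 2, A 0 3;
           A 1 0, A 1 1, A 1 2, A 1 3;
           A 2 0, A 2 1, A 2 2, A 2 3;
           A 3 0, A 3 1, A 3 2, A 3 3] := by
  ext i j
  fin_cases i <;> fin_cases j <;> rfl

theorem mat4_eq {a₀₀ a₀₁ a₀₂ a₀₃ a₁₀ a₁₁ a₁₂ a₁₃ a₂₀ a₂₁ a₂₂ a₂₃ a₃₀ a₃₁ a₃₂ a₃₃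
    b₀₀ b₀₁ b₀₂ b₀₃ b₁₀ b₁₁ b₁₂ b₁₃ b₂₀ b₂₁ b₂₂ b₂₃ b₃₀ b₃₁ b₃₂ b₃₃ : F}
    (h₀₀ : a₀₀ = b₀₀) (h₀₁ : a₀₁ = b₀₁) (h₀₂ : a₀₂ = b₀₂) (h₀₃ : a₀₃ = b₀₃)
    (h₁₀ : a₁₀ = b₁₀) (h₁₁ : a₁₁ = b₁₁) (h₁₂ : a₁₂ = b₁₂) (h₁₃ : a₁₃ = b₁₃)
    (h₂₀ : a₂₀ = b₂₀) (h₂₁ : a₂₁ = b₂₁) (h₂₂ : a₂₂ = b₂₂) (h₂₃ : a₂₃ = b₂₃)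
    (h₃₀ : a₃₀ = b₃₀) (h₃₁ : a₃₁ = b₃₁) (h₃₂ : a₃₂ = b₃₂) (h₃₃ : a₃₃ = b₃₃) :
    !![a₀₀, a₀₁, a₀₂, a₀₃; a₁₀, a₁₁, a₁₂, a₁₃; a₂₀, a₂₁, a₂₂, a₂₃; a₃₀, a₃₁, a₃₂, a₃₃] =
    (!![b₀₀, b₀₁, b₀₂, b₀₃; b₁₀, b₁₁, b₁₂, b₁₃; b₂₀, b₂₁, b₂₂, b₂₃; b₃₀, b₃₁, b₃₂, b₃₃] :
      Matrix (Fin 4) (Fin 4) F) := by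
  subst_vars; rfl

theorem mul_fin_four (a₀₀ a₀₁ a₀₂ a₀₃ a₁₀ a₁₁ a₁₂ a₁₃ a₂₀ a₂₁ a₂₂ a₂₃ a₃₀ a₃₁ a₃₂ a₃₃
    b₀₀ b₀₁ b₀₂ b₀₃ b₁₀ b₁₁ b₁₂ b₁₃ b₂₀ b₂₁ b₂₂ b₂₃ b₃₀ b₃₁ b₃₂ b₃₃ : F) :
    !![a₀₀, a₀₁, a₀₂, a₀₃; a₁₀, a₁₁, a₁₂, a₁₃; a₂₀, a₂₁, a₂₂, a₂₃; a₃₀, a₃₁, a₃₂, a₃₃] *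
    !![b₀₀, b₀₁, b₀₂, b₀₃; b₁₀, b₁₁, b₁₂, b₁₃; b₂₀, b₂₁, b₂₂, b₂₃; b₃₀, b₃₁, b₃₂, b₃₃] =
    !![a₀₀*b₀₀ + a₀₁*b₁₀ + a₀₂*b₂₀ + a₀₃*b₃₀, a₀₀*b₀₁ + a₀₁*b₁₁ + a₀₂*b₂₁ + a₀₃*b₃₁,
       a₀₀*b₀₂ + a₀₁*b₁₂ + a₀₂*b₂₂ + a₀₃*b₃₂, a₀₀*b₀₃ + a₀₁*b₁₃ + a₀₂*b₂₃ + a₀₃*b₃₃;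
       a₁₀*b₀₀ + a₁₁*b₁₀ + a₁₂*b₂₀ + a₁₃*b₃₀, a₁₀*b₀₁ + a₁₁*b₁₁ + a₁₂*b₂₁ + a₁₃*b₃₁,
       a₁₀*b₀₂ + a₁₁*b₁₂ + a₁₂*b₂₂ + a₁₃*b₃₂, a₁₀*b₀₃ + a₁₁*b₁₃ + a₁₂*b₂₃ + a₁₃*b₃₃;
       a₂₀*b₀₀ + a₂₁*b₁₀ + a₂₂*b₂₀ + a₂₃*b₃₀, a₂₀*b₀₁ + a₂₁*b₁₁ + a₂₂*b₂₁ + a₂₃*b₃₁,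
       a₂₀*b₀₂ + a₂₁*b₁₂ + a₂₂*b₂₂ + a₂₃*b₃₂, a₂₀*b₀₃ + a₂₁*b₁₃ + a₂₂*b₂₃ + a₂₃*b₃₃;
       a₃₀*b₀₀ + a₃₁*b₁₀ + a₃₂*b₂₀ + a₃₃*b₃₀, a₃₀*b₀₁ + a₃₁*b₁₁ + a₃₂*b₂₁ + a₃₃*b₃₁,
       a₃₀*b₀₂ + a₃₁*b₁₂ + a₃₂*b₂₂ + a₃₃*b₃₂, a₃₀*b₀₃ + a₃₁*b₁₃ + a₃₂*b₂₃ + a₃₃*b₃₃] := by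
  ext i j
  fin_cases i <;> fin_cases j <;>
    simp [Matrix.mul_apply, Fin.sum_univ_succ, ← add_assoc]

theorem one_fin_four : (1 : Matrix (Fin 4) (Fin 4) F) =
    !![1,0,0,0; 0,1,0,0; 0,0,1,0; 0,0,0,1] := by
  rw [eta_fin_four' 1]
  exact mat4_eq (by simp) (by simp) (by simp) (by simp) (by simp) (by simp) (by simp) (by simp)
    (by simp) (by simp) (by simp) (by simp) (by simp) (by simp) (by simp) (by simp)

end Aux

/-- In `GL(4, F)`, write `γ ∈ B·w₂w₃w₂·N` in Bruhat normal form
`γ = u₁ t w₂w₃w₂ u₂` with `u₁, u₂ ∈ N`, `t` diagonal, `a` the `(2,3)`-entry of `u₁` and `b`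
the `(2,3)`-entry of `u₂`.  If `a + b ≠ 0` then some `δ ∈ w₂N₂` conjugates `γ` into
`B·w₂w₃·N`, and if `a + b = 0` then some `δ ∈ w₂N₂` conjugates `γ` into `B·w₃·N`. -/
theorem bruhat_cell_w2w3w2_conjugation (w₂ w₃ : GL (Fin 4) F)
    (hw₂ : (w₂ : Matrix (Fin 4) (Fin 4) F) = permM F (Equiv.swap 1 2))
    (hw₃ : (w₃ : Matrix (Fin 4) (Fin 4) F) = permM F (Equiv.swap 2 3))
    (γ u₁ t u₂ : GL (Fin 4) F) (hu₁ : inN u₁)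
    (ht : ∀ i j : Fin 4, i ≠ j → (t : Matrix (Fin 4) (Fin 4) F) i j = 0)
    (hu₂ : inN u₂)
    (hγ : γ = u₁ * t * (w₂ * w₃ * w₂) * u₂)
    (a b : F) (ha : a = (u₁ : Matrix (Fin 4) (Fin 4) F) 1 2)
    (hb : b = (u₂ : Matrix (Fin 4) (Fin 4) F) 1 2) :
    (a + b ≠ 0 → ∃ ν : GL (Fin 4) F, inN2 ν ∧
        (w₂ * ν) * γ * (w₂ * ν)⁻¹ ∈ cell (w₂ * w₃)) ∧
    (a + b = 0 → ∃ ν : GL (Fin 4) F, inN2 ν ∧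
        (w₂ * ν) * γ * (w₂ * ν)⁻¹ ∈ cell w₃) := by
  have hW2 : (w₂ : Matrix (Fin 4) (Fin 4) F) = !![1, 0, 0, 0; 0, 0, 1, 0; 0, 1, 0, 0; 0, 0, 0, 1] := by
    rw [hw₂]; ext i j; fin_cases i <;> fin_cases j <;> rfl
  have hW3 : (w₃ : Matrix (Fin 4) (Fin 4) F) = !![1, 0, 0, 0; 0, 1, 0, 0; 0, 0, 0, 1; 0, 0, 1, 0] := by
    rw [hw₃]; ext i j; fin_cases i <;> fin_cases j <;> rfl
  have hw2sq : w₂ * w₂ = 1 := by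
    apply Units.ext
    show ((w₂ * w₂ : GL (Fin 4) F) : Matrix (Fin 4) (Fin 4) F) = ((1 : GL (Fin 4) F) : Matrix (Fin 4) (Fin 4) F)
    rw [Units.val_mul, hW2, Units.val_one, mul_fin_four, one_fin_four]
    apply mat4_eq <;> ring
  have hw3sq : w₃ * w₃ = 1 := by
    apply Units.ext
    show ((w₃ * w₃ : GL (Fin 4) F) : Matrix (Fin 4) (Fin 4) F) = ((1 : GL (Fin 4) F) : Matrix (Fin 4) (Fin 4) F)
    rw [Units.val_mul, hW3, Units.val_one, mul_fin_four, one_fin_four]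
    apply mat4_eq <;> ring
  have hw2inv : w₂⁻¹ = w₂ := inv_eq_of_mul_eq_one_right hw2sq
  have hw3inv : w₃⁻¹ = w₃ := inv_eq_of_mul_eq_one_right hw3sq
  obtain ⟨p, q, r, s, e, hU1⟩ : ∃ p q r s e : F, (u₁ : Matrix (Fin 4) (Fin 4) F) =
      !![1, p, q, r; 0, 1, a, s; 0, 0, 1, e; 0, 0, 0, 1] := by
    refine ⟨(u₁ : Matrix (Fin 4) (Fin 4) F) 0 1, (u₁ : Matrix (Fin 4) (Fin 4) F) 0 2,
      (u₁ : Matrix (Fin 4) (Fin 4) F) 0 3, (u₁ : Matrix (Fin 4) (Fin 4) F) 1 3,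
      (u₁ : Matrix (Fin 4) (Fin 4) F) 2 3, ?_⟩
    rw [eta_fin_four' (u₁ : Matrix (Fin 4) (Fin 4) F)]
    exact mat4_eq (hu₁.2 0) rfl rfl rfl (hu₁.1 1 0 (by decide)) (hu₁.2 1) ha.symm rfl
      (hu₁.1 2 0 (by decide)) (hu₁.1 2 1 (by decide)) (hu₁.2 2) rfl
      (hu₁.1 3 0 (by decide)) (hu₁.1 3 1 (by decide)) (hu₁.1 3 2 (by decide)) (hu₁.2 3)
  obtain ⟨p2, q2, r2, s2, e2, hU2⟩ : ∃ p2 q2 r2 s2 e2 : F, (u₂ : Matrix (Fin 4) (Fin 4) F) =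
      !![1, p2, q2, r2; 0, 1, b, s2; 0, 0, 1, e2; 0, 0, 0, 1] := by
    refine ⟨(u₂ : Matrix (Fin 4) (Fin 4) F) 0 1, (u₂ : Matrix (Fin 4) (Fin 4) F) 0 2,
      (u₂ : Matrix (Fin 4) (Fin 4) F) 0 3, (u₂ : Matrix (Fin 4) (Fin 4) F) 1 3,
      (u₂ : Matrix (Fin 4) (Fin 4) F) 2 3, ?_⟩
    rw [eta_fin_four' (u₂ : Matrix (Fin 4) (Fin 4) F)]
    exact mat4_eq (hu₂.2 0) rfl rfl rfl (hu₂.1 1 0 (by decide)) (hu₂.2 1) hb.symm rfl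
      (hu₂.1 2 0 (by decide)) (hu₂.1 2 1 (by decide)) (hu₂.2 2) rfl
      (hu₂.1 3 0 (by decide)) (hu₂.1 3 1 (by decide)) (hu₂.1 3 2 (by decide)) (hu₂.2 3)
  obtain ⟨t0, t1, t2, t3, hT⟩ : ∃ t0 t1 t2 t3 : F, (t : Matrix (Fin 4) (Fin 4) F) =
      !![t0, 0, 0, 0; 0, t1, 0, 0; 0, 0, t2, 0; 0, 0, 0, t3] := by
    refine ⟨(t : Matrix (Fin 4) (Fin 4) F) 0 0, (t : Matrix (Fin 4) (Fin 4) F) 1 1,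
      (t : Matrix (Fin 4) (Fin 4) F) 2 2, (t : Matrix (Fin 4) (Fin 4) F) 3 3, ?_⟩
    rw [eta_fin_four' (t : Matrix (Fin 4) (Fin 4) F)]
    exact mat4_eq rfl (ht 0 1 (by decide)) (ht 0 2 (by decide)) (ht 0 3 (by decide))
      (ht 1 0 (by decide)) rfl (ht 1 2 (by decide)) (ht 1 3 (by decide))
      (ht 2 0 (by decide)) (ht 2 1 (by decide)) rfl (ht 2 3 (by decide))
      (ht 3 0 (by decide)) (ht 3 1 (by decide)) (ht 3 2 (by decide)) rfl
  have htinv : (t : Matrix (Fin 4) (Fin 4) F) * ((t⁻¹ : GL (Fin 4) F) : Matrix (Fin 4) (Fin 4) F) = 1 := by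
    rw [← Units.val_mul, mul_inv_cancel, Units.val_one]
  rw [hT, eta_fin_four' ((t⁻¹ : GL (Fin 4) F) : Matrix (Fin 4) (Fin 4) F), mul_fin_four, one_fin_four] at htinv
  have ht0 : t0 ≠ 0 := by
    have h00 := congrFun (congrFun htinv 0) 0
    simp only [Matrix.of_apply, Matrix.cons_val_zero, Matrix.cons_val', Matrix.cons_val_one, Matrix.head_cons,
      Matrix.empty_val', Matrix.cons_val_fin_one, Matrix.head_fin_const] at h00
    apply left_ne_zero_of_mul_eq_one (a := t0)
    calc t0 * ((t⁻¹ : GL (Fin 4) F) : Matrix (Fin 4) (Fin 4) F) 0 0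
        = t0 * ((t⁻¹ : GL (Fin 4) F) : Matrix (Fin 4) (Fin 4) F) 0 0 + 0 * _ + 0 * _ + 0 * _ := by ring
      _ = 1 := h00
  have ht1 : t1 ≠ 0 := by
    have h11 := congrFun (congrFun htinv 1) 1
    simp only [Matrix.of_apply, Matrix.cons_val_zero, Matrix.cons_val', Matrix.cons_val_one, Matrix.head_cons,
      Matrix.empty_val', Matrix.cons_val_fin_one, Matrix.head_fin_const] at h11
    apply left_ne_zero_of_mul_eq_one (a := t1)
    calc t1 * ((t⁻¹ : GL (Fin 4) F) : Matrix (Fin 4) (Fin 4) F) 1 1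
        = 0 * _ + t1 * ((t⁻¹ : GL (Fin 4) F) : Matrix (Fin 4) (Fin 4) F) 1 1 + 0 * _ + 0 * _ := by ring
      _ = 1 := h11
  have ht2 : t2 ≠ 0 := by
    have h22 := congrFun (congrFun htinv 2) 2
    simp only [Matrix.of_apply, Matrix.cons_val_zero, Matrix.cons_val', Matrix.cons_val_one, Matrix.head_cons,
      Matrix.empty_val', Matrix.cons_val_fin_one, Matrix.head_fin_const] at h22
    apply left_ne_zero_of_mul_eq_one (a := t2)
    calc t2 * ((t⁻¹ : GL (Fin 4) F) : Matrix (Fin 4) (Fin 4) F) 2 2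
        = 0 * _ + 0 * _ + t2 * ((t⁻¹ : GL (Fin 4) F) : Matrix (Fin 4) (Fin 4) F) 2 2 + 0 * _ := by ring
      _ = 1 := h22
  have ht3 : t3 ≠ 0 := by
    have h33 := congrFun (congrFun htinv 3) 3
    simp only [Matrix.of_apply, Matrix.cons_val_zero, Matrix.cons_val', Matrix.cons_val_one, Matrix.head_cons,
      Matrix.empty_val', Matrix.cons_val_fin_one, Matrix.head_fin_const] at h33
    apply left_ne_zero_of_mul_eq_one (a := t3)
    calc t3 * ((t⁻¹ : GL (Fin 4) F) : Matrix (Fin 4) (Fin 4) F) 3 3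
        = 0 * _ + 0 * _ + 0 * _ + t3 * ((t⁻¹ : GL (Fin 4) F) : Matrix (Fin 4) (Fin 4) F) 3 3 := by ring
      _ = 1 := h33
  obtain ⟨i0, hi0⟩ : ∃ i0 : F, t0 * i0 = 1 := ⟨t0⁻¹, mul_inv_cancel₀ ht0⟩
  obtain ⟨i1, hi1⟩ : ∃ i1 : F, t1 * i1 = 1 := ⟨t1⁻¹, mul_inv_cancel₀ ht1⟩
  obtain ⟨i2, hi2⟩ : ∃ i2 : F, t2 * i2 = 1 := ⟨t2⁻¹, mul_inv_cancel₀ ht2⟩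
  obtain ⟨i3, hi3⟩ : ∃ i3 : F, t3 * i3 = 1 := ⟨t3⁻¹, mul_inv_cancel₀ ht3⟩
  constructor
  · -- case a + b ≠ 0
    intro hab
    obtain ⟨ci, hci⟩ : ∃ ci : F, (a + b) * ci = 1 := ⟨(a + b)⁻¹, mul_inv_cancel₀ hab⟩
    obtain ⟨ν, hν, hνinv⟩ : ∃ ν : GL (Fin 4) F,
        ((ν : GL (Fin 4) F) : Matrix (Fin 4) (Fin 4) F) = !![1, 0, 0, 0; 0, 1, b, 0; 0, 0, 1, 0; 0, 0, 0, 1] ∧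
        ((ν⁻¹ : GL (Fin 4) F) : Matrix (Fin 4) (Fin 4) F) = !![1, 0, 0, 0; 0, 1, -b, 0; 0, 0, 1, 0; 0, 0, 0, 1] := by
      refine ⟨⟨!![1, 0, 0, 0; 0, 1, b, 0; 0, 0, 1, 0; 0, 0, 0, 1], !![1, 0, 0, 0; 0, 1, -b, 0; 0, 0, 1, 0; 0, 0, 0, 1], ?_, ?_⟩, rfl, rfl⟩ <;>
        (rw [mul_fin_four, one_fin_four]; apply mat4_eq <;> ring)
    obtain ⟨u, hu, huinv⟩ : ∃ u : GL (Fin 4) F,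
        ((u : GL (Fin 4) F) : Matrix (Fin 4) (Fin 4) F) = !![1, 0, 0, 0; 0, 1, 0, t1*ci*i2 + e2; 0, 0, 1, s2; 0, 0, 0, 1] ∧
        ((u⁻¹ : GL (Fin 4) F) : Matrix (Fin 4) (Fin 4) F) = !![1, 0, 0, 0; 0, 1, 0, -t1*ci*i2 - e2; 0, 0, 1, -s2; 0, 0, 0, 1] := by
      refine ⟨⟨!![1, 0, 0, 0; 0, 1, 0, t1*ci*i2 + e2; 0, 0, 1, s2; 0, 0, 0, 1], !![1, 0, 0, 0; 0, 1, 0, -t1*ci*i2 - e2; 0, 0, 1, -s2; 0, 0, 0, 1], ?_, ?_⟩, rfl, rfl⟩ <;>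
        (rw [mul_fin_four, one_fin_four]; apply mat4_eq <;> ring)
    refine ⟨ν, ?_, ?_⟩
    · intro i j hij
      rw [hν]
      fin_cases i <;> fin_cases j <;>
        simp_all [Matrix.vecHead, Matrix.vecTail, Fin.ext_iff] <;>
        first | rfl | (rw [if_neg (by decide)]) | (rw [if_pos (by decide)])
    ·
      have c2s1 : (!![1, 0, 0, 0; 0, 0, 1, 0; 0, 1, 0, 0; 0, 0, 0, 1] * !![1, 0, 0, 0; 0, 1, b, 0; 0, 0, 1, 0; 0, 0, 0, 1] : Matrix (Fin 4) (Fin 4) F) = !![1, 0, 0, 0; 0, 0, 1, 0; 0, 1, (a + b) - a, 0; 0, 0, 0, 1] := by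
        rw [mul_fin_four]
        exact mat4_eq (by ring) (by ring) (by ring) (by ring) (by ring) (by ring) (by ring) (by ring) (by ring) (by ring) (by ring) (by ring) (by ring) (by ring) (by ring) (by ring)
      have c2s2 : (!![1, 0, 0, 0; 0, 0, 1, 0; 0, 1, (a + b) - a, 0; 0, 0, 0, 1] * !![1, p, q, r; 0, 1, a, s; 0, 0, 1, e; 0, 0, 0, 1] : Matrix (Fin 4) (Fin 4) F) = !![1, p, q, r; 0, 0, 1, e; 0, 1, (a + b), e*(a + b) + s - a*e; 0, 0, 0, 1] := by
        rw [mul_fin_four]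
        exact mat4_eq (by ring) (by ring) (by ring) (by ring) (by ring) (by ring) (by ring) (by ring) (by ring) (by ring) (by ring) (by ring) (by ring) (by ring) (by ring) (by ring)
      have c2s3 : (!![1, p, q, r; 0, 0, 1, e; 0, 1, (a + b), e*(a + b) + s - a*e; 0, 0, 0, 1] * !![t0, 0, 0, 0; 0, t1, 0, 0; 0, 0, t2, 0; 0, 0, 0, t3] : Matrix (Fin 4) (Fin 4) F) = !![t0, p*t1, q*t2, r*t3; 0, 0, t2, e*t3; 0, t1, (a + b)*t2, e*(a + b)*t3 + s*t3 - a*e*t3; 0, 0, 0, t3] := by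
        rw [mul_fin_four]
        exact mat4_eq (by ring) (by ring) (by ring) (by ring) (by ring) (by ring) (by ring) (by ring) (by ring) (by ring) (by ring) (by ring) (by ring) (by ring) (by ring) (by ring)
      have c2s4 : (!![t0, p*t1, q*t2, r*t3; 0, 0, t2, e*t3; 0, t1, (a + b)*t2, e*(a + b)*t3 + s*t3 - a*e*t3; 0, 0, 0, t3] * !![1, 0, 0, 0; 0, 0, 1, 0; 0, 1, 0, 0; 0, 0, 0, 1] : Matrix (Fin 4) (Fin 4) F) = !![t0, q*t2, p*t1, r*t3; 0, t2, 0, e*t3; 0, (a + b)*t2, t1, e*(a + b)*t3 + s*t3 - a*e*t3; 0, 0, 0, t3] := by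
        rw [mul_fin_four]
        exact mat4_eq (by ring) (by ring) (by ring) (by ring) (by ring) (by ring) (by ring) (by ring) (by ring) (by ring) (by ring) (by ring) (by ring) (by ring) (by ring) (by ring)
      have c2s5 : (!![t0, q*t2, p*t1, r*t3; 0, t2, 0, e*t3; 0, (a + b)*t2, t1, e*(a + b)*t3 + s*t3 - a*e*t3; 0, 0, 0, t3] * !![1, 0, 0, 0; 0, 1, 0, 0; 0, 0, 0, 1; 0, 0, 1, 0] : Matrix (Fin 4) (Fin 4) F) = !![t0, q*t2, r*t3, p*t1; 0, t2, e*t3, 0; 0, (a + b)*t2, e*(a + b)*t3 + s*t3 - a*e*t3, t1; 0, 0, t3, 0] := by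
        rw [mul_fin_four]
        exact mat4_eq (by ring) (by ring) (by ring) (by ring) (by ring) (by ring) (by ring) (by ring) (by ring) (by ring) (by ring) (by ring) (by ring) (by ring) (by ring) (by ring)
      have c2s6 : (!![t0, q*t2, r*t3, p*t1; 0, t2, e*t3, 0; 0, (a + b)*t2, e*(a + b)*t3 + s*t3 - a*e*t3, t1; 0, 0, t3, 0] * !![1, 0, 0, 0; 0, 0, 1, 0; 0, 1, 0, 0; 0, 0, 0, 1] : Matrix (Fin 4) (Fin 4) F) = !![t0, r*t3, q*t2, p*t1; 0, e*t3, t2, 0; 0, e*(a + b)*t3 + s*t3 - a*e*t3, (a + b)*t2, t1; 0, t3, 0, 0] := by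
        rw [mul_fin_four]
        exact mat4_eq (by ring) (by ring) (by ring) (by ring) (by ring) (by ring) (by ring) (by ring) (by ring) (by ring) (by ring) (by ring) (by ring) (by ring) (by ring) (by ring)
      have c2s7 : (!![t0, r*t3, q*t2, p*t1; 0, e*t3, t2, 0; 0, e*(a + b)*t3 + s*t3 - a*e*t3, (a + b)*t2, t1; 0, t3, 0, 0] * !![1, p2, q2, r2; 0, 1, b, s2; 0, 0, 1, e2; 0, 0, 0, 1] : Matrix (Fin 4) (Fin 4) F) = !![t0, p2*t0 + r*t3, q2*t0 + r*(a + b)*t3 - r*a*t3 + q*t2, r2*t0 + r*s2*t3 + q*e2*t2 + p*t1; 0, e*t3, t2 + e*(a + b)*t3 - a*e*t3, e2*t2 + e*s2*t3; 0, e*(a + b)*t3 + s*t3 - a*e*t3, (a + b)*t2 + e*(a + b)*(a + b)*t3 + s*(a + b)*t3 - 2*a*e*(a + b)*t3 - a*s*t3 + a*a*e*t3, t1 + (a + b)*e2*t2 + e*(a + b)*s2*t3 + s*s2*t3 - a*e*s2*t3; 0, t3, (a + b)*t3 - a*t3, s2*t3] := by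
        rw [mul_fin_four]
        exact mat4_eq (by ring) (by ring) (by ring) (by ring) (by ring) (by ring) (by ring) (by ring) (by ring) (by ring) (by ring) (by ring) (by ring) (by ring) (by ring) (by ring)
      have c2s8 : (!![t0, p2*t0 + r*t3, q2*t0 + r*(a + b)*t3 - r*a*t3 + q*t2, r2*t0 + r*s2*t3 + q*e2*t2 + p*t1; 0, e*t3, t2 + e*(a + b)*t3 - a*e*t3, e2*t2 + e*s2*t3; 0, e*(a + b)*t3 + s*t3 - a*e*t3, (a + b)*t2 + e*(a + b)*(a + b)*t3 + s*(a + b)*t3 - 2*a*e*(a + b)*t3 - a*s*t3 + a*a*e*t3, t1 + (a + b)*e2*t2 + e*(a + b)*s2*t3 + s*s2*t3 - a*e*s2*t3; 0, t3, (a + b)*t3 - a*t3, s2*t3] * !![1, 0, 0, 0; 0, 1, -b, 0; 0, 0, 1, 0; 0, 0, 0, 1] : Matrix (Fin 4) (Fin 4) F) = !![t0, p2*t0 + r*t3, q2*t0 - p2*(a + b)*t0 + a*p2*t0 + q*t2, r2*t0 + r*s2*t3 + q*e2*t2 + p*t1; 0, e*t3, t2, e2*t2 + e*s2*t3; 0,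 e*(a + b)*t3 + s*t3 - a*e*t3, (a + b)*t2, t1 + (a + b)*e2*t2 + e*(a + b)*s2*t3 + s*s2*t3 - a*e*s2*t3; 0, t3, 0, s2*t3] := by
        rw [mul_fin_four]
        exact mat4_eq (by ring) (by ring) (by ring) (by ring) (by ring) (by ring) (by ring) (by ring) (by ring) (by ring) (by ring) (by ring) (by ring) (by ring) (by ring) (by ring)
      have c2s9 : (!![t0, p2*t0 + r*t3, q2*t0 - p2*(a + b)*t0 + a*p2*t0 + q*t2, r2*t0 + r*s2*t3 + q*e2*t2 + p*t1; 0, e*t3, t2, e2*t2 + e*s2*t3; 0, e*(a + b)*t3 + s*t3 - a*e*t3, (a + b)*t2, t1 + (a + b)*e2*t2 + e*(a + b)*s2*t3 + s*s2*t3 - a*e*s2*t3; 0, t3, 0, s2*t3] * !![1, 0, 0, 0; 0, 0, 1, 0; 0, 1, 0, 0; 0, 0, 0, 1] : Matrix (Fin 4) (Fin 4) F) = !![t0, q2*t0 - p2*(a + b)*t0 + a*p2*t0 + q*t2, p2*t0 + r*t3, r2*t0 + r*s2*t3 + q*e2*t2 + p*t1; 0, t2, e*t3, e2*t2 + e*s2*t3;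 0, (a + b)*t2, e*(a + b)*t3 + s*t3 - a*e*t3, t1 + (a + b)*e2*t2 + e*(a + b)*s2*t3 + s*s2*t3 - a*e*s2*t3; 0, 0, t3, s2*t3] := by
        rw [mul_fin_four]
        exact mat4_eq (by ring) (by ring) (by ring) (by ring) (by ring) (by ring) (by ring) (by ring) (by ring) (by ring) (by ring) (by ring) (by ring) (by ring) (by ring) (by ring)
      have c2s10 : (!![t0, q2*t0 - p2*(a + b)*t0 + a*p2*t0 + q*t2, p2*t0 + r*t3, r2*t0 + r*s2*t3 + q*e2*t2 + p*t1; 0, t2, e*t3, e2*t2 + e*s2*t3; 0, (a + b)*t2, e*(a + b)*t3 + s*t3 - a*e*t3, t1 + (a + b)*e2*t2 + e*(a + b)*s2*t3 + s*s2*t3 - a*e*s2*t3; 0, 0, t3, s2*t3] * !![1, 0, 0, 0; 0, 1, 0, -t1*ci*i2 - e2; 0, 0, 1, -s2; 0, 0, 0, 1] : Matrix (Fin 4) (Fin 4) F) = !![t0, q2*t0 - p2*(a + b)*t0 + a*p2*t0 + q*t2, p2*t0 + r*t3, r2*t0 - q2*t0*t1*ci*i2 - q2*e2*t0 + p2*t0*t1*i2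 - p2*s2*t0 + p2*(a + b)*e2*t0 - a*p2*t0*t1*ci*i2 - a*p2*e2*t0 - q*t1*ci + p*t1; 0, t2, e*t3, -t1*ci; 0, (a + b)*t2, e*(a + b)*t3 + s*t3 - a*e*t3, 0; 0, 0, t3, 0] := by
        rw [mul_fin_four]
        exact mat4_eq (by ring) (by ring) (by ring) (by linear_combination (p2*t0*t1*i2) * hci + (-q*t1*ci) * hi2) (by ring) (by ring) (by ring) (by linear_combination (-t1*ci) * hi2) (by ring) (by ring) (by ring) (by linear_combination (-t1*t2*i2) * hci + (-t1) * hi2) (by ring) (by ring) (by ring) (by ring)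
      have c2s11 : (!![t0, q2*t0 - p2*(a + b)*t0 + a*p2*t0 + q*t2, p2*t0 + r*t3, r2*t0 - q2*t0*t1*ci*i2 - q2*e2*t0 + p2*t0*t1*i2 - p2*s2*t0 + p2*(a + b)*e2*t0 - a*p2*t0*t1*ci*i2 - a*p2*e2*t0 - q*t1*ci + p*t1; 0, t2, e*t3, -t1*ci; 0, (a + b)*t2, e*(a + b)*t3 + s*t3 - a*e*t3, 0; 0, 0, t3, 0] * !![1, 0, 0, 0; 0, 1, 0, 0; 0, 0, 0, 1; 0, 0, 1, 0] : Matrix (Fin 4) (Fin 4) F) = !![t0, q2*t0 - p2*(a + b)*t0 + a*p2*t0 + q*t2, r2*t0 - q2*t0*t1*ci*i2 - q2*e2*t0 + p2*t0*t1*i2 - p2*s2*t0 + p2*(a + b)*e2*t0 - a*p2*t0*t1*ci*i2 - a*p2*e2*t0 - q*t1*ci + p*t1, p2*t0 + r*t3; 0, t2, -t1*ci, e*t3; 0, (a + b)*t2, 0, e*(a + b)*t3 + s*t3 - a*e*t3; 0, 0, 0, t3] := by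
        rw [mul_fin_four]
        exact mat4_eq (by ring) (by ring) (by ring) (by ring) (by ring) (by ring) (by ring) (by ring) (by ring) (by ring) (by ring) (by ring) (by ring) (by ring) (by ring) (by ring)
      have c2s12 : (!![t0, q2*t0 - p2*(a + b)*t0 + a*p2*t0 + q*t2, r2*t0 - q2*t0*t1*ci*i2 - q2*e2*t0 + p2*t0*t1*i2 - p2*s2*t0 + p2*(a + b)*e2*t0 - a*p2*t0*t1*ci*i2 - a*p2*e2*t0 - q*t1*ci + p*t1, p2*t0 + r*t3; 0, t2, -t1*ci, e*t3; 0, (a + b)*t2, 0, e*(a + b)*t3 + s*t3 - a*e*t3; 0, 0, 0, t3] * !![1, 0, 0, 0; 0, 0, 1, 0; 0, 1, 0, 0; 0, 0, 0, 1] : Matrix (Fin 4) (Fin 4) F) = !![t0, r2*t0 - q2*t0*t1*ci*i2 - q2*e2*t0 + p2*t0*t1*i2 - p2*s2*t0 + p2*(a + b)*e2*t0 - a*p2*t0*t1*ci*i2 - a*p2*e2*t0 - q*t1*ci + p*t1, q2*t0 - p2*(a + b)*t0 + a*p2*t0 + q*t2, p2*t0 + r*t3; 0, -t1*ci, t2,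 e*t3; 0, 0, (a + b)*t2, e*(a + b)*t3 + s*t3 - a*e*t3; 0, 0, 0, t3] := by
        rw [mul_fin_four]
        exact mat4_eq (by ring) (by ring) (by ring) (by ring) (by ring) (by ring) (by ring) (by ring) (by ring) (by ring) (by ring) (by ring) (by ring) (by ring) (by ring) (by ring)
      have hval : (((w₂ * ν) * γ * (w₂ * ν)⁻¹ * u⁻¹ * (w₂ * w₃)⁻¹ : GL (Fin 4) F) :
          Matrix (Fin 4) (Fin 4) F) = !![t0, r2*t0 - q2*t0*t1*ci*i2 - q2*e2*t0 + p2*t0*t1*i2 - p2*s2*t0 + p2*(a + b)*e2*t0 - a*p2*t0*t1*ci*i2 - a*p2*e2*t0 - q*t1*ci + p*t1, q2*t0 - p2*(a + b)*t0 + a*p2*t0 + q*t2, p2*t0 + r*t3; 0, -t1*ci, t2, e*t3; 0, 0, (a + b)*t2, e*(a + b)*t3 + s*t3 - a*e*t3; 0, 0, 0, t3] := by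
        rw [hγ]
        simp only [_root_.mul_inv_rev, hw2inv, hw3inv, Units.val_mul, hW2, hW3, hν, hνinv, hU1, hT,
          hU2, huinv, ← mul_assoc]
        rw [c2s1, c2s2, c2s3, c2s4, c2s5, c2s6, c2s7, c2s8, c2s9, c2s10, c2s11, c2s12]
      refine ⟨(w₂ * ν) * γ * (w₂ * ν)⁻¹ * u⁻¹ * (w₂ * w₃)⁻¹, u, ?_, ?_, ?_⟩
      · intro i j hij
        rw [hval]
        fin_cases i <;> fin_cases j <;> first | (exact absurd hij (by decide)) | simp [Matrix.vecHead, Matrix.vecTail]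
      · constructor
        · intro i j hij
          rw [hu]
          fin_cases i <;> fin_cases j <;> first | (exact absurd hij (by decide)) | simp [Matrix.vecHead, Matrix.vecTail]
        · intro i
          rw [hu]
          fin_cases i <;> simp [Matrix.vecHead, Matrix.vecTail]
      · group
  · -- case a + b = 0
    intro hab
    have hb' : b = -a := eq_neg_of_add_eq_zero_right hab
    rw [hb'] at hU2
    obtain ⟨ν, hν, hνinv⟩ : ∃ ν : GL (Fin 4) F,
        ((ν : GL (Fin 4) F) : Matrix (Fin 4) (Fin 4) F) = !![1, 0, 0, 0; 0, 1, -a, 0; 0, 0, 1, 0; 0, 0, 0, 1] ∧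
        ((ν⁻¹ : GL (Fin 4) F) : Matrix (Fin 4) (Fin 4) F) = !![1, 0, 0, 0; 0, 1, a, 0; 0, 0, 1, 0; 0, 0, 0, 1] := by
      refine ⟨⟨!![1, 0, 0, 0; 0, 1, -a, 0; 0, 0, 1, 0; 0, 0, 0, 1], !![1, 0, 0, 0; 0, 1, a, 0; 0, 0, 1, 0; 0, 0, 0, 1], ?_, ?_⟩, rfl, rfl⟩ <;>
        (rw [mul_fin_four, one_fin_four]; apply mat4_eq <;> ring)
    obtain ⟨u, hu, huinv⟩ : ∃ u : GL (Fin 4) F,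
        ((u : GL (Fin 4) F) : Matrix (Fin 4) (Fin 4) F) = !![1, 0, 0, 0; 0, 1, 0, 0; 0, 0, 1, s2; 0, 0, 0, 1] ∧
        ((u⁻¹ : GL (Fin 4) F) : Matrix (Fin 4) (Fin 4) F) = !![1, 0, 0, 0; 0, 1, 0, 0; 0, 0, 1, -s2; 0, 0, 0, 1] := by
      refine ⟨⟨!![1, 0, 0, 0; 0, 1, 0, 0; 0, 0, 1, s2; 0, 0, 0, 1], !![1, 0, 0, 0; 0, 1, 0, 0; 0, 0, 1, -s2; 0, 0, 0, 1], ?_, ?_⟩, rfl, rfl⟩ <;>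
        (rw [mul_fin_four, one_fin_four]; apply mat4_eq <;> ring)
    refine ⟨ν, ?_, ?_⟩
    · intro i j hij
      rw [hν]
      fin_cases i <;> fin_cases j <;>
        simp_all [Matrix.vecHead, Matrix.vecTail, Fin.ext_iff] <;>
        first | rfl | (rw [if_neg (by decide)]) | (rw [if_pos (by decide)])
    ·
      have c1s1 : (!![1, 0, 0, 0; 0, 0, 1, 0; 0, 1, 0, 0; 0, 0, 0, 1] * !![1, 0, 0, 0; 0, 1, -a, 0; 0, 0, 1, 0; 0, 0, 0, 1] : Matrix (Fin 4) (Fin 4) F) = !![1, 0, 0, 0; 0, 0, 1, 0; 0, 1, -a, 0; 0, 0, 0, 1] := by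
        rw [mul_fin_four]
        exact mat4_eq (by ring) (by ring) (by ring) (by ring) (by ring) (by ring) (by ring) (by ring) (by ring) (by ring) (by ring) (by ring) (by ring) (by ring) (by ring) (by ring)
      have c1s2 : (!![1, 0, 0, 0; 0, 0, 1, 0; 0, 1, -a, 0; 0, 0, 0, 1] * !![1, p, q, r; 0, 1, a, s; 0, 0, 1, e; 0, 0, 0, 1] : Matrix (Fin 4) (Fin 4) F) = !![1, p, q, r; 0, 0, 1, e; 0, 1, 0, s - a*e; 0, 0, 0, 1] := by
        rw [mul_fin_four]
        exact mat4_eq (by ring) (by ring) (by ring) (by ring) (by ring) (by ring) (by ring) (by ring) (by ring) (by ring) (by ring) (by ring) (by ring) (by ring) (by ring) (by ring)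
      have c1s3 : (!![1, p, q, r; 0, 0, 1, e; 0, 1, 0, s - a*e; 0, 0, 0, 1] * !![t0, 0, 0, 0; 0, t1, 0, 0; 0, 0, t2, 0; 0, 0, 0, t3] : Matrix (Fin 4) (Fin 4) F) = !![t0, p*t1, q*t2, r*t3; 0, 0, t2, e*t3; 0, t1, 0, s*t3 - a*e*t3; 0, 0, 0, t3] := by
        rw [mul_fin_four]
        exact mat4_eq (by ring) (by ring) (by ring) (by ring) (by ring) (by ring) (by ring) (by ring) (by ring) (by ring) (by ring) (by ring) (by ring) (by ring) (by ring) (by ring)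
      have c1s4 : (!![t0, p*t1, q*t2, r*t3; 0, 0, t2, e*t3; 0, t1, 0, s*t3 - a*e*t3; 0, 0, 0, t3] * !![1, 0, 0, 0; 0, 0, 1, 0; 0, 1, 0, 0; 0, 0, 0, 1] : Matrix (Fin 4) (Fin 4) F) = !![t0, q*t2, p*t1, r*t3; 0, t2, 0, e*t3; 0, 0, t1, s*t3 - a*e*t3; 0, 0, 0, t3] := by
        rw [mul_fin_four]
        exact mat4_eq (by ring) (by ring) (by ring) (by ring) (by ring) (by ring) (by ring) (by ring) (by ring) (by ring) (by ring) (by ring) (by ring) (by ring) (by ring) (by ring)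
      have c1s5 : (!![t0, q*t2, p*t1, r*t3; 0, t2, 0, e*t3; 0, 0, t1, s*t3 - a*e*t3; 0, 0, 0, t3] * !![1, 0, 0, 0; 0, 1, 0, 0; 0, 0, 0, 1; 0, 0, 1, 0] : Matrix (Fin 4) (Fin 4) F) = !![t0, q*t2, r*t3, p*t1; 0, t2, e*t3, 0; 0, 0, s*t3 - a*e*t3, t1; 0, 0, t3, 0] := by
        rw [mul_fin_four]
        exact mat4_eq (by ring) (by ring) (by ring) (by ring) (by ring) (by ring) (by ring) (by ring) (by ring) (by ring) (by ring) (by ring) (by ring) (by ring) (by ring) (by ring)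
      have c1s6 : (!![t0, q*t2, r*t3, p*t1; 0, t2, e*t3, 0; 0, 0, s*t3 - a*e*t3, t1; 0, 0, t3, 0] * !![1, 0, 0, 0; 0, 0, 1, 0; 0, 1, 0, 0; 0, 0, 0, 1] : Matrix (Fin 4) (Fin 4) F) = !![t0, r*t3, q*t2, p*t1; 0, e*t3, t2, 0; 0, s*t3 - a*e*t3, 0, t1; 0, t3, 0, 0] := by
        rw [mul_fin_four]
        exact mat4_eq (by ring) (by ring) (by ring) (by ring) (by ring) (by ring) (by ring) (by ring) (by ring) (by ring) (by ring) (by ring) (by ring) (by ring) (by ring) (by ring)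
      have c1s7 : (!![t0, r*t3, q*t2, p*t1; 0, e*t3, t2, 0; 0, s*t3 - a*e*t3, 0, t1; 0, t3, 0, 0] * !![1, p2, q2, r2; 0, 1, -a, s2; 0, 0, 1, e2; 0, 0, 0, 1] : Matrix (Fin 4) (Fin 4) F) = !![t0, p2*t0 + r*t3, q2*t0 - r*a*t3 + q*t2, r2*t0 + r*s2*t3 + q*e2*t2 + p*t1; 0, e*t3, t2 - a*e*t3, e2*t2 + e*s2*t3; 0, s*t3 - a*e*t3, -a*s*t3 + a*a*e*t3, t1 + s*s2*t3 - a*e*s2*t3; 0, t3, -a*t3, s2*t3] := by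
        rw [mul_fin_four]
        exact mat4_eq (by ring) (by ring) (by ring) (by ring) (by ring) (by ring) (by ring) (by ring) (by ring) (by ring) (by ring) (by ring) (by ring) (by ring) (by ring) (by ring)
      have c1s8 : (!![t0, p2*t0 + r*t3, q2*t0 - r*a*t3 + q*t2, r2*t0 + r*s2*t3 + q*e2*t2 + p*t1; 0, e*t3, t2 - a*e*t3, e2*t2 + e*s2*t3; 0, s*t3 - a*e*t3, -a*s*t3 + a*a*e*t3, t1 + s*s2*t3 - a*e*s2*t3; 0, t3, -a*t3, s2*t3] * !![1, 0, 0, 0; 0, 1, a, 0; 0, 0, 1, 0; 0, 0, 0, 1] : Matrix (Fin 4) (Fin 4) F) = !![t0, p2*t0 + r*t3, q2*t0 + a*p2*t0 + q*t2, r2*t0 + r*s2*t3 + q*e2*t2 + p*t1; 0, e*t3, t2, e2*t2 + e*s2*t3; 0, s*t3 - a*e*t3, 0, t1 + s*s2*t3 - a*e*s2*t3; 0, t3, 0, s2*t3] := by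
        rw [mul_fin_four]
        exact mat4_eq (by ring) (by ring) (by ring) (by ring) (by ring) (by ring) (by ring) (by ring) (by ring) (by ring) (by ring) (by ring) (by ring) (by ring) (by ring) (by ring)
      have c1s9 : (!![t0, p2*t0 + r*t3, q2*t0 + a*p2*t0 + q*t2, r2*t0 + r*s2*t3 + q*e2*t2 + p*t1; 0, e*t3, t2, e2*t2 + e*s2*t3; 0, s*t3 - a*e*t3, 0, t1 + s*s2*t3 - a*e*s2*t3; 0, t3, 0, s2*t3] * !![1, 0, 0, 0; 0, 0, 1, 0; 0, 1, 0, 0; 0, 0, 0, 1] : Matrix (Fin 4) (Fin 4) F) = !![t0, q2*t0 + a*p2*t0 + q*t2, p2*t0 + r*t3, r2*t0 + r*s2*t3 + q*e2*t2 + p*t1; 0, t2, e*t3, e2*t2 + e*s2*t3; 0, 0, s*t3 - a*e*t3, t1 + s*s2*t3 - a*e*s2*t3; 0, 0, t3, s2*t3] := by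
        rw [mul_fin_four]
        exact mat4_eq (by ring) (by ring) (by ring) (by ring) (by ring) (by ring) (by ring) (by ring) (by ring) (by ring) (by ring) (by ring) (by ring) (by ring) (by ring) (by ring)
      have c1s10 : (!![t0, q2*t0 + a*p2*t0 + q*t2, p2*t0 + r*t3, r2*t0 + r*s2*t3 + q*e2*t2 + p*t1; 0, t2, e*t3, e2*t2 + e*s2*t3; 0, 0, s*t3 - a*e*t3, t1 + s*s2*t3 - a*e*s2*t3; 0, 0, t3, s2*t3] * !![1, 0, 0, 0; 0, 1, 0, 0; 0, 0, 1, -s2; 0, 0, 0, 1] : Matrix (Fin 4) (Fin 4) F) = !![t0, q2*t0 + a*p2*t0 + q*t2, p2*t0 + r*t3, r2*t0 - p2*s2*t0 + q*e2*t2 + p*t1; 0, t2, e*t3, e2*t2; 0, 0, s*t3 - a*e*t3, t1; 0, 0, t3, 0] := by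
        rw [mul_fin_four]
        exact mat4_eq (by ring) (by ring) (by ring) (by ring) (by ring) (by ring) (by ring) (by ring) (by ring) (by ring) (by ring) (by ring) (by ring) (by ring) (by ring) (by ring)
      have c1s11 : (!![t0, q2*t0 + a*p2*t0 + q*t2, p2*t0 + r*t3, r2*t0 - p2*s2*t0 + q*e2*t2 + p*t1; 0, t2, e*t3, e2*t2; 0, 0, s*t3 - a*e*t3, t1; 0, 0, t3, 0] * !![1, 0, 0, 0; 0, 1, 0, 0; 0, 0, 0, 1; 0, 0, 1, 0] : Matrix (Fin 4) (Fin 4) F) = !![t0, q2*t0 + a*p2*t0 + q*t2, r2*t0 - p2*s2*t0 + q*e2*t2 + p*t1, p2*t0 + r*t3; 0, t2, e2*t2, e*t3; 0, 0, t1, s*t3 - a*e*t3; 0, 0, 0, t3] := by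
        rw [mul_fin_four]
        exact mat4_eq (by ring) (by ring) (by ring) (by ring) (by ring) (by ring) (by ring) (by ring) (by ring) (by ring) (by ring) (by ring) (by ring) (by ring) (by ring) (by ring)
      have hval : (((w₂ * ν) * γ * (w₂ * ν)⁻¹ * u⁻¹ * w₃⁻¹ : GL (Fin 4) F) :
          Matrix (Fin 4) (Fin 4) F) = !![t0, q2*t0 + a*p2*t0 + q*t2, r2*t0 - p2*s2*t0 + q*e2*t2 + p*t1, p2*t0 + r*t3; 0, t2, e2*t2, e*t3; 0, 0, t1, s*t3 - a*e*t3; 0, 0, 0, t3] := by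
        rw [hγ]
        simp only [_root_.mul_inv_rev, hw2inv, hw3inv, Units.val_mul, hW2, hW3, hν, hνinv, hU1, hT,
          hU2, huinv, ← mul_assoc]
        rw [c1s1, c1s2, c1s3, c1s4, c1s5, c1s6, c1s7, c1s8, c1s9, c1s10, c1s11]
      refine ⟨(w₂ * ν) * γ * (w₂ * ν)⁻¹ * u⁻¹ * w₃⁻¹, u, ?_, ?_, ?_⟩
      · intro i j hij
        rw [hval]
        fin_cases i <;> fin_cases j <;> first | (exact absurd hij (by decide)) | simp [Matrix.vecHead, Matrix.vecTail]
      · constructor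
        · intro i j hij
          rw [hu]
          fin_cases i <;> fin_cases j <;> first | (exact absurd hij (by decide)) | simp [Matrix.vecHead, Matrix.vecTail]
        · intro i
          rw [hu]
          fin_cases i <;> simp [Matrix.vecHead, Matrix.vecTail]
      · group
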